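/- arXiv:1501.00362 — 2 statements merged into one kernel-verified Lean document; each statement's English description precedes it below -/
import Mathlib

section
/- Let (a_j)_{j=1}^n be positive reals and let ψ : ℝ≥0 → ℝ≥0 be increasing with ψ(0)=0 and t/ψ(t) non-decreasing on (0,∞). Let H₁ be a Hilbert space with orthonormal basis (e_j)_{j=1}^n, α > 0, and x = Σ_j x_j e_j. Then ‖Σ_j (α/(α + a_j²)) x_j e_j‖ ≤ ψ(α) · (Σ_j |x_j|²/ψ(a_j²)²)^{1/2}. -/
theorem tikhonov_residual_source_bound {H : Type*} [NormedAddCommGroup H]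
    [InnerProductSpace ℝ H] {n : ℕ} (e : OrthonormalBasis (Fin n) ℝ H)
    (a : Fin n → ℝ) (ha : ∀ j, 0 < a j)
    (ψ : ℝ → ℝ) (hψ0 : ψ 0 = 0) (hψmono : MonotoneOn ψ (Set.Ici 0))
    (hψpos : ∀ t : ℝ, 0 < t → 0 < ψ t)
    (hq : ∀ s t : ℝ, 0 < s → s ≤ t → s / ψ s ≤ t / ψ t)
    (α : ℝ) (hα : 0 < α) (x : Fin n → ℝ) :
    ‖∑ j, ((α / (α + (a j) ^ 2)) * x j) • e j‖ ≤
      ψ α * Real.sqrt (∑ j, (x j) ^ 2 / (ψ ((a j) ^ 2)) ^ 2) := by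
  set c : Fin n → ℝ := fun j => (α / (α + (a j) ^ 2)) * x j with hc
  -- key pointwise bound : (c j)^2 ≤ (ψ α)^2 * (x j)^2 / (ψ (a j ^ 2))^2
  have hψα : 0 < ψ α := hψpos α hα
  have key : ∀ j, (c j) ^ 2 ≤ (ψ α) ^ 2 * ((x j) ^ 2 / (ψ ((a j) ^ 2)) ^ 2) := by
    intro j
    set u := (a j) ^ 2 with hu
    have hu0 : 0 < u := pow_pos (ha j) 2
    have hψu : 0 < ψ u := hψpos u hu0
    have hfilter : α / (α + u) * ψ u ≤ ψ α := by
      rcases le_total u α with h | h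
      · have h1 : ψ u ≤ ψ α := hψmono hu0.le hα.le h
        have h2 : α / (α + u) ≤ 1 := by
          rw [div_le_one (by linarith)]; linarith
        calc α / (α + u) * ψ u ≤ 1 * ψ α := by
              apply mul_le_mul h2 h1 hψu.le zero_le_one
          _ = ψ α := one_mul _
      · have h1 : α / ψ α ≤ u / ψ u := hq α u hα h
        -- ψ u ≤ u * ψ α / α
        have h2 : ψ u ≤ u * ψ α / α := by
          rw [div_le_div_iff₀ hψα hψu] at h1
          rw [le_div_iff₀ hα]
          nlinarith
        have h3 : α / (α + u) * (u * ψ α / α) ≤ ψ α := by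
          rw [div_mul_eq_mul_div, div_le_iff₀ (by linarith)]
          have : α / (α + u) ≤ 1 := by
            rw [div_le_one (by linarith)]; linarith
          field_simp
          nlinarith
        calc α / (α + u) * ψ u ≤ α / (α + u) * (u * ψ α / α) := by
              apply mul_le_mul_of_nonneg_left h2 (by positivity)
          _ ≤ ψ α := h3
    have habs : |c j| ≤ ψ α * (|x j| / ψ u) := by
      have : |c j| = (α / (α + u)) * |x j| := by
        rw [hc, abs_mul, abs_of_nonneg (by positivity : (0:ℝ) ≤ α / (α + u))]
      rw [this]
      rw [← sub_nonneg] at hfilter ⊢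
      have : ψ α * (|x j| / ψ u) - α / (α + u) * |x j|
          = (|x j| / ψ u) * (ψ α - α / (α + u) * ψ u) := by
        field_simp
      rw [this]
      positivity
    calc (c j) ^ 2 = |c j| ^ 2 := (sq_abs _).symm
      _ ≤ (ψ α * (|x j| / ψ u)) ^ 2 := by
          apply pow_le_pow_left₀ (abs_nonneg _) habs
      _ = (ψ α) ^ 2 * ((x j) ^ 2 / (ψ u) ^ 2) := by
          rw [mul_pow, div_pow, sq_abs]
  have hnormsq : ‖∑ j, c j • e j‖ ^ 2 = ∑ j, (c j) ^ 2 := by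
    have := e.orthonormal.inner_sum c c Finset.univ
    rw [← @real_inner_self_eq_norm_sq]
    simpa [starRingEnd_apply, sq] using this
  have hsum : ‖∑ j, c j • e j‖ ^ 2 ≤ (ψ α) ^ 2 * ∑ j, (x j) ^ 2 / (ψ ((a j) ^ 2)) ^ 2 := by
    rw [hnormsq, Finset.mul_sum]
    exact Finset.sum_le_sum fun j _ => key j
  have h1 : ‖∑ j, c j • e j‖ = Real.sqrt (‖∑ j, c j • e j‖ ^ 2) :=
    (Real.sqrt_sq (norm_nonneg _)).symm
  rw [h1]
  calc Real.sqrt (‖∑ j, c j • e j‖ ^ 2)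
      ≤ Real.sqrt ((ψ α) ^ 2 * ∑ j, (x j) ^ 2 / (ψ ((a j) ^ 2)) ^ 2) :=
        Real.sqrt_le_sqrt hsum
    _ = ψ α * Real.sqrt (∑ j, (x j) ^ 2 / (ψ ((a j) ^ 2)) ^ 2) := by
        rw [Real.sqrt_mul (by positivity), Real.sqrt_sq hψα.le]
end

section
/- Let (β_j)_{j=1}^n be positive reals and φ : ℝ≥0 → ℝ≥0 increasing with φ(0)=0 and t/φ(t) non-decreasing on (0,∞). For λ > 0 and x = Σ_j x_j e_j in a Hilbert space with orthonormal basis (e_j), ‖Σ_j (λ β_j²/(1 + λ β_j²)) x_j e_j‖ ≤ φ(λ) · (Σ_j |x_j|²/φ(β_j^{-2})²)^{1/2}. -/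
theorem presmoothing_residual_source_bound {H : Type*} [NormedAddCommGroup H]
    [InnerProductSpace ℝ H] {n : ℕ} (e : OrthonormalBasis (Fin n) ℝ H)
    (β : Fin n → ℝ) (hβ : ∀ j, 0 < β j)
    (φ : ℝ → ℝ) (hφ0 : φ 0 = 0) (hφmono : MonotoneOn φ (Set.Ici 0))
    (hφpos : ∀ t : ℝ, 0 < t → 0 < φ t)
    (hq : ∀ s t : ℝ, 0 < s → s ≤ t → s / φ s ≤ t / φ t)
    (lam : ℝ) (hlam : 0 < lam) (x : Fin n → ℝ) :
    ‖∑ j, ((lam * (β j) ^ 2 / (1 + lam * (β j) ^ 2)) * x j) • e j‖ ≤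
      φ lam * Real.sqrt (∑ j, (x j) ^ 2 / (φ (((β j) ^ 2)⁻¹)) ^ 2) := by
  have hphilam : 0 < φ lam := hφpos lam hlam
  set c : Fin n → ℝ := fun j => lam * (β j) ^ 2 / (1 + lam * (β j) ^ 2) with hc
  have hnorm : ‖∑ j, (c j * x j) • e j‖ =
      Real.sqrt (∑ j, (c j * x j) ^ 2) := by
    have h1 : ∑ j, (c j * x j) • e j =
        e.repr.symm (WithLp.toLp 2 (fun j => c j * x j) : EuclideanSpace ℝ (Fin n)) := by
      rw [← e.sum_repr_symm]
    rw [h1, LinearIsometryEquiv.norm_map, EuclideanSpace.norm_eq]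
    simp only [Real.norm_eq_abs]
    congr 1
    exact Finset.sum_congr rfl fun j _ => by rw [sq_abs]
  rw [hnorm]
  -- pointwise bound : (c j * x j)^2 ≤ φ(lam)^2 * (x j)^2 / φ(u j)^2
  have key : ∀ j, (c j * x j) ^ 2 ≤
      (φ lam) ^ 2 * ((x j) ^ 2 / (φ (((β j) ^ 2)⁻¹)) ^ 2) := by
    intro j
    set u : ℝ := ((β j) ^ 2)⁻¹ with hu
    have hb2 : 0 < (β j) ^ 2 := pow_pos (hβ j) 2
    have hupos : 0 < u := by rw [hu]; exact inv_pos.mpr hb2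
    have hφu : 0 < φ u := hφpos u hupos
    have hcval : c j = lam / (u + lam) := by
      rw [hc, hu]
      field_simp
      rw [mul_add, mul_one_div_cancel hb2.ne']; ring
    have hbound : c j ≤ φ lam / φ u := by
      rw [hcval]
      rcases le_total u lam with h | h
      · have h1 : lam / (u + lam) ≤ 1 := by
          rw [div_le_one (by linarith)]; linarith
        have h2 : (1 : ℝ) ≤ φ lam / φ u :=
          (one_le_div hφu).2 (hφmono (le_of_lt hupos) (le_of_lt hlam) h)
        linarith
      · have h1 : lam / (u + lam) ≤ lam / u := by
          apply div_le_div_of_nonneg_left (le_of_lt hlam) hupos; linarith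
        have h2 : lam / φ lam ≤ u / φ u := hq lam u hlam h
        have h3 : lam / u ≤ φ lam / φ u := by
          rw [div_le_div_iff₀ hupos hφu]
          rw [div_le_div_iff₀ hphilam hφu] at h2
          linarith
        linarith
      
    have hcnn : 0 ≤ c j := by
      rw [hcval]; positivity
    calc (c j * x j) ^ 2 = (c j) ^ 2 * (x j) ^ 2 := by ring
      _ ≤ (φ lam / φ u) ^ 2 * (x j) ^ 2 := by
          apply mul_le_mul_of_nonneg_right _ (sq_nonneg _)
          exact pow_le_pow_left₀ hcnn hbound 2
      _ = (φ lam) ^ 2 * ((x j) ^ 2 / (φ u) ^ 2) := by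
          field_simp
  calc Real.sqrt (∑ j, (c j * x j) ^ 2)
      ≤ Real.sqrt (∑ j, (φ lam) ^ 2 * ((x j) ^ 2 / (φ (((β j) ^ 2)⁻¹)) ^ 2)) :=
        Real.sqrt_le_sqrt (Finset.sum_le_sum fun j _ => key j)
    _ = φ lam * Real.sqrt (∑ j, (x j) ^ 2 / (φ (((β j) ^ 2)⁻¹)) ^ 2) := by
        rw [← Finset.mul_sum, Real.sqrt_mul (sq_nonneg _),
          Real.sqrt_sq (le_of_lt hphilam)]
end
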